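/- Change of variables for inverse-CDF pushforward with density: if pdf : ℝ → [0,∞) is continuous with ∫ pdf dλ = 1, cdf(t) = ∫_{(-∞,t]} pdf dλ, and invcdf is measurable with invcdf(cdf(t)) = t for all t with pdf(t) > 0, then for any bounded measurable h : ℝ → [0,∞], ∫₀¹ h(invcdf(x)) dλ(x) = ∫_ℝ h(t) · pdf(t) dλ(t). -/

import Mathlib

open MeasureTheory Set Filter Topology

theorem invcdf_change_of_variables
    (pdf : ℝ → ℝ) (hpdf_cont : Continuous pdf) (hpdf_nonneg : ∀ t, 0 ≤ pdf t)
    (hpdf_int : ∫⁻ t, ENNReal.ofReal (pdf t) ∂volume = 1)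
    (cdf : ℝ → ℝ) (hcdf : ∀ t, cdf t = ∫ x in Set.Iic t, pdf x ∂volume)
    (invcdf : ℝ → ℝ) (hinvcdf_meas : Measurable invcdf)
    (hinv : ∀ t, 0 < pdf t → invcdf (cdf t) = t)
    (h : ℝ → ENNReal) (hh : Measurable h)
    (C : ENNReal) (hC : C ≠ ⊤) (hbdd : ∀ t, h t ≤ C) :
    ∫⁻ x in Set.Ioo (0:ℝ) 1, h (invcdf x) ∂volume
      = ∫⁻ t, h t * ENNReal.ofReal (pdf t) ∂volume := by
  have hmeas : Measurable fun t => ENNReal.ofReal (pdf t) :=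
    ENNReal.measurable_ofReal.comp hpdf_cont.measurable
  set ν : Measure ℝ := volume.withDensity (fun t => ENNReal.ofReal (pdf t)) with hν
  have hνuniv : ν Set.univ = 1 := by
    rw [hν, withDensity_apply _ MeasurableSet.univ, Measure.restrict_univ, hpdf_int]
  have hint : Integrable pdf volume := by
    refine ⟨hpdf_cont.aestronglyMeasurable, ?_⟩
    rw [hasFiniteIntegral_iff_ofReal (Filter.Eventually.of_forall hpdf_nonneg), hpdf_int]
    exact ENNReal.one_lt_top
  have hνIic : ∀ t, ν (Set.Iic t) = ENNReal.ofReal (cdf t) := by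
    intro t
    rw [hν, withDensity_apply _ measurableSet_Iic, hcdf t,
      ofReal_integral_eq_lintegral_ofReal hint.integrableOn
        (Filter.Eventually.of_forall hpdf_nonneg)]
  have hcdf_nonneg : ∀ t, 0 ≤ cdf t := fun t => by
    rw [hcdf t]; exact setIntegral_nonneg measurableSet_Iic fun x _ => hpdf_nonneg x
  have hcdf_mono : Monotone cdf := by
    intro a b hab
    rw [hcdf a, hcdf b]
    exact setIntegral_mono_set hint.integrableOn
      (Filter.Eventually.of_forall hpdf_nonneg)
      (HasSubset.Subset.eventuallyLE (Set.Iic_subset_Iic.2 hab))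
  have hcdf_cont : Continuous cdf := by
    have : ∀ t, cdf t = cdf 0 + ∫ u in (0:ℝ)..t, pdf u := by
      intro t
      rw [hcdf t, hcdf 0,
        ← intervalIntegral.integral_Iic_sub_Iic hint.integrableOn hint.integrableOn]
      ring
    exact (continuous_const.add
      (intervalIntegral.continuous_primitive (fun a b => hint.intervalIntegrable) 0)).congr
      fun t => (this t).symm
  have hcdf_meas : Measurable cdf := hcdf_cont.measurable
  -- cdf tends to 1 at +∞
  have htop : Tendsto cdf atTop (𝓝 1) := by
    have h1 : Tendsto (fun t => ν (Set.Iic t)) atTop (𝓝 1) := by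
      simpa [hνuniv] using tendsto_measure_Iic_atTop ν
    have h2 : Tendsto (fun t => (ν (Set.Iic t)).toReal) atTop (𝓝 1) := by
      simpa [Function.comp_def] using (ENNReal.tendsto_toReal (by norm_num)).comp h1
    refine h2.congr fun t => ?_
    rw [hνIic t, ENNReal.toReal_ofReal (hcdf_nonneg t)]
  -- ν of the set where cdf is small tends to 0 at -∞
  have hbot : ∀ y : ℝ, 0 < y → ∃ t, cdf t < y := by
    intro y hy
    by_contra hcon
    push_neg at hcon
    have hten : Tendsto (fun n : ℕ => ν (Set.Iic (-(n:ℝ)))) atTop (𝓝 (ν (⋂ n : ℕ, Set.Iic (-(n:ℝ))))) := by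
      refine tendsto_measure_iInter_atTop (fun n => measurableSet_Iic.nullMeasurableSet)
        (fun m n hmn => Set.Iic_subset_Iic.2 (by exact_mod_cast neg_le_neg (by exact_mod_cast hmn))) ⟨0, ?_⟩
      rw [hνIic]; exact ENNReal.ofReal_ne_top
    have hempty : (⋂ n : ℕ, Set.Iic (-(n:ℝ))) = ∅ := by
      ext x
      simp only [Set.mem_iInter, Set.mem_Iic, Set.mem_empty_iff_false, iff_false, not_forall, not_le]
      obtain ⟨n, hn⟩ := exists_nat_gt (-x)
      exact ⟨n, by linarith⟩
    rw [hempty, measure_empty] at hten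
    have : ∀ n : ℕ, ENNReal.ofReal y ≤ ν (Set.Iic (-(n:ℝ))) := by
      intro n
      rw [hνIic]
      exact ENNReal.ofReal_le_ofReal (hcon _)
    have hle : ENNReal.ofReal y ≤ 0 := ge_of_tendsto hten (Filter.Eventually.of_forall this)
    simp only [nonpos_iff_eq_zero, ENNReal.ofReal_eq_zero] at hle
    linarith
  -- key: pushforward of ν under cdf is Lebesgue on (0,1)
  have hkey : Measure.map cdf ν = volume.restrict (Set.Ioo (0:ℝ) 1) := by
    have : IsProbabilityMeasure ν := ⟨hνuniv⟩
    refine Measure.ext_of_Iic _ _ fun y => ?_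
    rw [Measure.map_apply hcdf_meas measurableSet_Iic,
      Measure.restrict_apply measurableSet_Iic]
    rcases lt_or_ge y 0 with hy | hy
    · have h1 : cdf ⁻¹' Set.Iic y = ∅ := by
        ext t; simp only [Set.mem_preimage, Set.mem_Iic, Set.mem_empty_iff_false, iff_false, not_le]
        exact lt_of_lt_of_le hy (hcdf_nonneg t)
      have h2 : Set.Iic y ∩ Set.Ioo (0:ℝ) 1 = ∅ := by
        ext x; simp only [Set.mem_inter_iff, Set.mem_Iic, Set.mem_Ioo, Set.mem_empty_iff_false, iff_false]
        rintro ⟨h1, h2, _⟩; linarith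
      rw [h1, h2]
      simp
    rcases le_or_gt 1 y with hy1 | hy1
    · have h1 : cdf ⁻¹' Set.Iic y = Set.univ := by
        ext t; simp only [Set.mem_preimage, Set.mem_Iic, Set.mem_univ, iff_true]
        refine le_trans ?_ hy1
        have : ENNReal.ofReal (cdf t) ≤ 1 := by
          rw [← hνIic t, ← hνuniv]; exact measure_mono (Set.subset_univ _)
        have := ENNReal.toReal_mono (by norm_num) this
        rwa [ENNReal.toReal_ofReal (hcdf_nonneg t), ENNReal.toReal_one] at this
      have h2 : Set.Iic y ∩ Set.Ioo (0:ℝ) 1 = Set.Ioo (0:ℝ) 1 := by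
        apply Set.inter_eq_self_of_subset_right
        intro x hx; exact le_trans hx.2.le hy1
      rw [h1, h2, hνuniv, Real.volume_Ioo]
      norm_num
    -- case 0 ≤ y < 1
    · have h2 : Set.Iic y ∩ Set.Ioo (0:ℝ) 1 = Set.Ioc 0 y := by
        ext x
        simp only [Set.mem_inter_iff, Set.mem_Iic, Set.mem_Ioo, Set.mem_Ioc]
        constructor
        · rintro ⟨h1, h2, _⟩; exact ⟨h2, h1⟩
        · rintro ⟨h1, h2⟩; exact ⟨h2, h1, lt_of_le_of_lt h2 hy1⟩
      rw [h2, Real.volume_Ioc]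
      simp only [sub_zero]
      -- need : ν {t | cdf t ≤ y} = ofReal y
      set S : Set ℝ := cdf ⁻¹' Set.Iic y with hS
      have hSclosed : IsClosed S := IsClosed.preimage hcdf_cont isClosed_Iic
      have hSbdd : BddAbove S := by
        obtain ⟨b, hb⟩ := (htop.eventually (eventually_gt_nhds hy1)).exists
        exact ⟨b, fun t ht => by
          by_contra hc
          push_neg at hc
          exact absurd (le_trans (hcdf_mono hc.le) ht) (not_le.2 hb)⟩
      by_cases hSne : S.Nonempty
      · set s := sSup S with hs
        have hsS : s ∈ S := hSclosed.csSup_mem hSne hSbdd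
        have hSIic : S = Set.Iic s := by
          apply Set.Subset.antisymm
          · exact fun t ht => le_csSup hSbdd ht
          · intro t ht
            exact le_trans (hcdf_mono ht) hsS
        have hcdfs : cdf s = y := by
          refine le_antisymm hsS ?_
          have htend : Tendsto cdf (𝓝[>] s) (𝓝 (cdf s)) :=
            (hcdf_cont.tendsto s).mono_left nhdsWithin_le_nhds
          refine ge_of_tendsto htend ?_
          filter_upwards [self_mem_nhdsWithin] with t ht
          by_contra hc
          push_neg at hc
          have htS : t ∈ S := hc.le
          rw [hSIic] at htS
          exact absurd (Set.mem_Iic.1 htS) (not_le.2 ht)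
        rw [hSIic, hνIic, hcdfs]
      · rw [Set.not_nonempty_iff_eq_empty] at hSne
        rw [hSne, measure_empty]
        -- then y must be ≤ cdf t for all t; if y > 0 contradiction
        rcases eq_or_lt_of_le hy with hy0 | hy0
        · rw [← hy0]; simp
        · obtain ⟨t, ht⟩ := hbot y hy0
          exact absurd (Set.eq_empty_iff_forall_notMem.1 hSne t) (by simp [hS, ht.le])
  -- now change variables
  calc ∫⁻ x in Set.Ioo (0:ℝ) 1, h (invcdf x) ∂volume
      = ∫⁻ x, h (invcdf x) ∂(Measure.map cdf ν) := by rw [hkey]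
    _ = ∫⁻ t, h (invcdf (cdf t)) ∂ν := lintegral_map (hh.comp hinvcdf_meas) hcdf_meas
    _ = ∫⁻ t, h t ∂ν := by
        refine lintegral_congr_ae ?_
        have hnull : ν {t | ¬ 0 < pdf t} = 0 := by
          have hms : MeasurableSet {t : ℝ | ¬ 0 < pdf t} := by
            have he : {t : ℝ | ¬ 0 < pdf t} = pdf ⁻¹' Set.Iic 0 := by
              ext t; simp [not_lt]
            rw [he]; exact hpdf_cont.measurable measurableSet_Iic
          rw [hν, withDensity_apply _ hms]
          rw [setLIntegral_congr_fun hms (fun t ht => by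
            simp only [Set.mem_setOf_eq, not_lt] at ht
            simp [ENNReal.ofReal_eq_zero.2 ht] : EqOn (fun t => ENNReal.ofReal (pdf t)) (fun _ => (0:ENNReal)) {t | ¬ 0 < pdf t})]
          simp
        refine measure_mono_null ?_ hnull
        intro t ht
        simp only [Set.mem_compl_iff, Set.mem_setOf_eq] at ht ⊢
        exact fun hpos => ht (by rw [hinv t hpos])
    _ = ∫⁻ t, h t * ENNReal.ofReal (pdf t) ∂volume := by
        rw [hν, lintegral_withDensity_eq_lintegral_mul volume hmeas hh]
        exact lintegral_congr fun t => mul_comm _ _
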